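/- For every natural number n and every real number x with 0 < x < 1, the integral g_n(x) = ∫_0^x (ln t)/(1+t^2)^{n+1} dt equals the convergent series ∑_{k=0}^{∞} (-1)^k·C(n+k, k)·(x^{2k+1}/(2k+1))·(ln x - 1/(2k+1)). -/

import Mathlib

open Real MeasureTheory Set Filter intervalIntegral
open scoped Topology

noncomputable def Fk (k : ℕ) (t : ℝ) : ℝ :=
  t ^ (2 * k + 1) * Real.log t / (2 * k + 1) - t ^ (2 * k + 1) / ((2 * k + 1 : ℝ) ^ 2)

lemma Fk_deriv (k : ℕ) {t : ℝ} (ht : 0 < t) :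
    HasDerivAt (Fk k) (Real.log t * t ^ (2 * k)) t := by
  have h1 : HasDerivAt (fun t : ℝ => t ^ (2 * k + 1)) ((2 * k + 1) * t ^ (2 * k)) t := by
    simpa using hasDerivAt_pow (2 * k + 1) t
  have h2 : HasDerivAt Real.log t⁻¹ t := Real.hasDerivAt_log ht.ne'
  have h3 := ((h1.mul h2).div_const ((2 * k + 1 : ℝ))).sub (h1.div_const ((2 * k + 1 : ℝ) ^ 2))
  refine h3.congr_deriv ?_
  have hk : (2 * k + 1 : ℝ) ≠ 0 := by positivity
  have ht0 : t ≠ 0 := ht.ne'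
  field_simp
  ring

lemma Fk_tendsto_zero (k : ℕ) : Tendsto (Fk k) (𝓝[>] (0:ℝ)) (𝓝 0) := by
  have A : Tendsto (fun t : ℝ => Real.log t * t ^ ((2 * k + 1 : ℕ) : ℝ)) (𝓝[>] (0:ℝ)) (𝓝 0) :=
    tendsto_log_mul_rpow_nhdsGT_zero (by positivity)
  have A' : Tendsto (fun t : ℝ => t ^ (2 * k + 1) * Real.log t) (𝓝[>] (0:ℝ)) (𝓝 0) := by
    apply A.congr'
    filter_upwards [self_mem_nhdsWithin] with t (ht : 0 < t)
    rw [Real.rpow_natCast, mul_comm]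
  have B : Tendsto (fun t : ℝ => t ^ (2 * k + 1)) (𝓝[>] (0:ℝ)) (𝓝 0) := by
    have h0 := tendsto_nhdsWithin_of_tendsto_nhds (s := Ioi (0:ℝ))
      ((continuous_pow (2 * k + 1)).tendsto (0:ℝ))
    simpa using h0
  have := (A'.div_const ((2 * k + 1 : ℝ))).sub (B.div_const ((2 * k + 1 : ℝ) ^ 2))
  simp at this
  exact this

lemma Fk_contOn (k : ℕ) {x : ℝ} (hx : 0 < x) : ContinuousOn (Fk k) (Icc 0 x) := by
  intro t ht
  rcases eq_or_lt_of_le ht.1 with h | h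
  · rw [← Set.Ioc_insert_left hx.le, ← h]
    unfold ContinuousWithinAt
    rw [nhdsWithin_insert, tendsto_sup]
    have hF0 : Fk k 0 = 0 := by simp [Fk]
    rw [hF0]
    refine ⟨by simpa [hF0] using tendsto_pure_nhds (Fk k) 0,
      (Fk_tendsto_zero k).mono_left (nhdsWithin_mono _ (fun y hy => hy.1))⟩
  · exact ((Fk_deriv k h).continuousAt).continuousWithinAt

lemma integrable_log_pow (k : ℕ) {x : ℝ} (hx : 0 < x) (hx1 : x ≤ 1) :
    IntegrableOn (fun t : ℝ => Real.log t * t ^ (2 * k)) (Ioc 0 x) := by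
  have h := intervalIntegral.integrableOn_deriv_of_nonneg (g := fun t => -Fk k t)
    (g' := fun t => -(Real.log t * t ^ (2 * k))) (a := 0) (b := x)
    ((Fk_contOn k hx).neg) (fun t ht => (Fk_deriv k ht.1).neg) ?_
  · have h2 := h.neg
    have : (-fun t : ℝ => -(Real.log t * t ^ (2 * k))) = fun t : ℝ => Real.log t * t ^ (2 * k) := by
      funext t; simp
    rwa [this] at h2
  · intro t ht
    have h1 : Real.log t ≤ 0 := Real.log_nonpos ht.1.le (ht.2.le.trans hx1)
    have h2 : (0:ℝ) ≤ t ^ (2 * k) := pow_nonneg ht.1.le _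
    simpa using mul_nonpos_of_nonpos_of_nonneg h1 h2

lemma integral_log_pow (k : ℕ) {x : ℝ} (hx : 0 < x) (hx1 : x ≤ 1) :
    ∫ t in Ioc (0:ℝ) x, Real.log t * t ^ (2 * k) = Fk k x := by
  have hint : IntervalIntegrable (fun t : ℝ => Real.log t * t ^ (2 * k)) volume 0 x := by
    rw [intervalIntegrable_iff_integrableOn_Ioc_of_le hx.le]
    exact integrable_log_pow k hx hx1
  have hb' : Tendsto (Fk k) (𝓝[<] x) (𝓝 (Fk k x)) :=
    ((Fk_deriv k hx).continuousAt).tendsto.mono_left nhdsWithin_le_nhds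
  have := intervalIntegral.integral_eq_sub_of_hasDerivAt_of_tendsto hx
    (fun t ht => Fk_deriv k ht.1) hint (Fk_tendsto_zero k) hb'
  rw [intervalIntegral.integral_of_le hx.le] at this
  simpa using this

/-- For `n ∈ ℕ` and `0 < x < 1`, the series
`∑_{k=0}^∞ (-1)^k C(n+k,k) (x^{2k+1}/(2k+1)) (ln x - 1/(2k+1))`
converges to `gₙ(x) = ∫_0^x ln t/(1+t²)^(n+1) dt`. -/
theorem g_series (n : ℕ) (x : ℝ) (hx : 0 < x) (hx1 : x < 1) :
    HasSum
      (fun k : ℕ =>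
        (-1 : ℝ) ^ k * (Nat.choose (n + k) k : ℝ) * (x ^ (2 * k + 1) / (2 * (k : ℝ) + 1)) *
          (Real.log x - 1 / (2 * (k : ℝ) + 1)))
      (∫ t in (0:ℝ)..x, Real.log t / (1 + t ^ 2) ^ (n + 1)) := by
  have hchoose : ∀ k : ℕ, ((n + k).choose k : ℝ) = ((k + n).choose n : ℝ) := by
    intro k
    rw [Nat.add_comm n k]
    congr 1
    simpa using Nat.choose_symm (Nat.le_add_left n k)
  -- pointwise sum
  have hpt : ∀ t : ℝ, 0 < t → t < 1 →
      HasSum (fun k : ℕ => (-1:ℝ) ^ k * ((n + k).choose k : ℝ) * (Real.log t * t ^ (2 * k)))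
        (Real.log t / (1 + t ^ 2) ^ (n + 1)) := by
    intro t ht ht1
    have hr : ‖(-(t ^ 2) : ℝ)‖ < 1 := by
      rw [norm_neg, Real.norm_eq_abs, abs_of_nonneg (by positivity)]
      nlinarith
    have h := hasSum_choose_mul_geometric_of_norm_lt_one (𝕜 := ℝ) n hr
    have h2 := h.mul_left (Real.log t)
    have heq : (fun k : ℕ => Real.log t * (((k + n).choose n : ℝ) * (-(t ^ 2)) ^ k)) =
        fun k : ℕ => (-1:ℝ) ^ k * ((n + k).choose k : ℝ) * (Real.log t * t ^ (2 * k)) := by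
      funext k
      rw [hchoose k, neg_pow, ← pow_mul]
      ring
    rw [heq] at h2
    rw [show Real.log t / (1 + t ^ 2) ^ (n + 1) = Real.log t * (1 / (1 - -t ^ 2) ^ (n + 1)) by
      rw [sub_neg_eq_add]; ring]
    exact h2
  set μ := volume.restrict (Ioc (0:ℝ) x) with hμ
  set F : ℕ → ℝ → ℝ := fun k t => (-1:ℝ) ^ k * ((n + k).choose k : ℝ) * (Real.log t * t ^ (2 * k))
    with hF
  have hF_int : ∀ k, Integrable (F k) μ := by
    intro k
    exact ((integrable_log_pow k hx hx1.le).const_mul _)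
  have hnorm : ∀ k, ∫ t, ‖F k t‖ ∂μ = ((n + k).choose k : ℝ) * (-(Fk k x)) := by
    intro k
    have : ∀ t ∈ Ioc (0:ℝ) x, ‖F k t‖ = ((n + k).choose k : ℝ) * (-(Real.log t * t ^ (2 * k))) := by
      intro t ht
      have h1 : Real.log t ≤ 0 := Real.log_nonpos ht.1.le (ht.2.trans hx1.le)
      have h2 : (0:ℝ) ≤ t ^ (2 * k) := pow_nonneg ht.1.le _
      have h3 : Real.log t * t ^ (2 * k) ≤ 0 := mul_nonpos_of_nonpos_of_nonneg h1 h2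
      rw [hF]
      simp only [norm_mul, norm_pow, norm_neg, norm_one, one_pow, one_mul, Real.norm_eq_abs]
      rw [abs_of_nonpos h1, Nat.abs_cast, abs_of_pos ht.1]
      ring
    rw [hμ, MeasureTheory.setIntegral_congr_fun measurableSet_Ioc this,
      MeasureTheory.integral_const_mul]
    rw [MeasureTheory.integral_neg, integral_log_pow k hx hx1.le]
  have hFkx : ∀ k : ℕ, Fk k x = x ^ (2 * k + 1) / (2 * (k:ℝ) + 1) *
      (Real.log x - 1 / (2 * (k:ℝ) + 1)) := by
    intro k
    have hk : (2 * (k:ℝ) + 1) ≠ 0 := by positivity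
    rw [Fk]
    push_cast
    field_simp
  have hF_sum : Summable fun k => ∫ t, ‖F k t‖ ∂μ := by
    have hsum : Summable (fun k : ℕ => ((k + n).choose n : ℝ) * (x ^ 2) ^ k *
        (x * (1 - Real.log x))) := by
      apply Summable.mul_right
      exact summable_choose_mul_geometric_of_norm_lt_one n
        (by rw [Real.norm_eq_abs, abs_of_nonneg (by positivity)]; nlinarith)
    apply Summable.of_nonneg_of_le _ _ hsum
    · intro k
      rw [hnorm k]
      apply mul_nonneg (Nat.cast_nonneg _)
      rw [hFkx k]
      have h1 : Real.log x ≤ 0 := Real.log_nonpos hx.le hx1.le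
      have h2 : (0:ℝ) < 2 * (k:ℝ) + 1 := by positivity
      have h3 : (0:ℝ) < x ^ (2 * k + 1) := by positivity
      rw [neg_nonneg]
      apply mul_nonpos_of_nonneg_of_nonpos (by positivity)
      have : (1:ℝ) / (2 * (k:ℝ) + 1) > 0 := by positivity
      linarith
    · intro k
      rw [hnorm k, hchoose k, hFkx k, mul_assoc]
      have h1 : Real.log x ≤ 0 := Real.log_nonpos hx.le hx1.le
      have h2 : (0:ℝ) < 2 * (k:ℝ) + 1 := by positivity
      have h2' : (1:ℝ) ≤ 2 * (k:ℝ) + 1 := by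
        have hk : (0:ℝ) ≤ (k:ℝ) := Nat.cast_nonneg k
        linarith
      apply mul_le_mul_of_nonneg_left _ (Nat.cast_nonneg _)
      have hple : x ^ (2 * k + 1) = (x ^ 2) ^ k * x := by rw [← pow_mul, pow_succ]
      have hxp : (0:ℝ) < (x ^ 2) ^ k := by positivity
      have key : x ^ (2 * k + 1) / (2 * (k:ℝ) + 1) ≤ x ^ (2 * k + 1) :=
        div_le_self (by positivity) h2'
      have key2 : 1 / (2 * (k:ℝ) + 1) - Real.log x ≤ 1 - Real.log x := by
        have : 1 / (2 * (k:ℝ) + 1) ≤ 1 := by rw [div_le_one h2]; linarith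
        linarith
      have key3 : (0:ℝ) ≤ 1 / (2 * (k:ℝ) + 1) - Real.log x := by
        have : (0:ℝ) < 1 / (2 * (k:ℝ) + 1) := by positivity
        linarith
      calc -(x ^ (2 * k + 1) / (2 * (k:ℝ) + 1) * (Real.log x - 1 / (2 * (k:ℝ) + 1)))
          = x ^ (2 * k + 1) / (2 * (k:ℝ) + 1) * (1 / (2 * (k:ℝ) + 1) - Real.log x) := by ring
        _ ≤ x ^ (2 * k + 1) * (1 - Real.log x) := mul_le_mul key key2 key3 (by positivity)
        _ = (x ^ 2) ^ k * (x * (1 - Real.log x)) := by rw [pow_succ, pow_mul]; ring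
  have hmain := MeasureTheory.hasSum_integral_of_summable_integral_norm hF_int hF_sum
  have h1 : (fun k => ∫ t, F k t ∂μ) = (fun k : ℕ =>
      (-1 : ℝ) ^ k * (Nat.choose (n + k) k : ℝ) * (x ^ (2 * k + 1) / (2 * (k : ℝ) + 1)) *
        (Real.log x - 1 / (2 * (k : ℝ) + 1))) := by
    funext k
    rw [hF]
    simp only
    rw [MeasureTheory.integral_const_mul]
    rw [hμ]
    rw [integral_log_pow k hx hx1.le, hFkx k]
    ring
  have h2 : (∫ t, ∑' k, F k t ∂μ) = ∫ t in (0:ℝ)..x, Real.log t / (1 + t ^ 2) ^ (n + 1) := by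
    rw [intervalIntegral.integral_of_le hx.le, hμ]
    apply MeasureTheory.setIntegral_congr_fun measurableSet_Ioc
    intro t ht
    exact (hpt t ht.1 (lt_of_le_of_lt ht.2 hx1)).tsum_eq
  rw [h1, h2] at hmain
  exact hmain
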